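/- Let f : [n] → {0,1}, n a power of 2. Partition the edges of the augmented line into maximal a-paths for each a in {0,...,log₂ n − 1}: for each a there are 2^a vertex sequences p of the form x, x+2^a, x+2·2^a, ..., each maximal. Then the sum over all maximal a-paths p (over all a) of (f(end of p) − f(start of p)) equals Σ_{x ∈ [n]} f(x)·(p⁺(x) − p⁻(x)), where p⁺(x) (resp. p⁻(x)) is the number of maximal paths in the collection ending (resp. starting) at x; moreover p⁺ is monotone nondecreasing in x and p⁻ is monotone nonincreasing in x. -/

import Mathlib

/-- Partition the edges of the augmented line on `[n] = {0,…,n-1}`, `n = 2^k`, into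
maximal `a`-paths (for `a < k`, the `2^a` paths `s, s+2^a, s+2·2^a, …` with `s < 2^a`,
each ending at `s + n - 2^a`).  Then the sum over all maximal paths of
`f(end) − f(start)` equals `Σ_x f(x)·(p⁺(x) − p⁻(x))`, where `p⁺(x)` (resp. `p⁻(x)`)
counts maximal paths ending (resp. starting) at `x`; moreover `p⁺` is monotone
nondecreasing and `p⁻` is monotone nonincreasing. -/
theorem stmt_4 (k n : ℕ) (hn : n = 2 ^ k) (f : ℕ → Bool) :
    (∑ a ∈ Finset.range k, ∑ s ∈ Finset.range (2 ^ a),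
        ((if f (s + (n - 2 ^ a)) then (1:ℝ) else 0) - (if f s then (1:ℝ) else 0))) =
      (∑ x ∈ Finset.range n, (if f x then (1:ℝ) else 0) *
        ((((Finset.range k).filter fun a => n - 2 ^ a ≤ x).card : ℝ) -
          (((Finset.range k).filter fun a => x < 2 ^ a).card : ℝ))) ∧
    Monotone (fun x : ℕ => ((Finset.range k).filter fun a => n - 2 ^ a ≤ x).card) ∧
    Antitone (fun x : ℕ => ((Finset.range k).filter fun a => x < 2 ^ a).card) := by
  set g : ℕ → ℝ := fun x => if f x then (1:ℝ) else 0 with hg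
  refine ⟨?_, ?_, ?_⟩
  · have hle : ∀ a ∈ Finset.range k, (2:ℕ) ^ a ≤ n := by
      intro a ha
      rw [hn]
      exact Nat.pow_le_pow_right (by norm_num) (Finset.mem_range.mp ha).le
    have hA : ∀ a ∈ Finset.range k,
        (∑ s ∈ Finset.range (2 ^ a), g (s + (n - 2 ^ a)))
          = ∑ x ∈ Finset.range n, if n - 2 ^ a ≤ x then g x else 0 := by
      intro a ha
      have h := hle a ha
      conv_rhs => rw [← Finset.sum_filter]
      have hset : (Finset.range n).filter (fun x => n - 2 ^ a ≤ x)
          = Finset.Ico (n - 2 ^ a) n := by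
        ext x
        simp only [Finset.mem_filter, Finset.mem_range, Finset.mem_Ico]
        omega
      rw [hset, Finset.sum_Ico_eq_sum_range]
      have : n - (n - 2 ^ a) = 2 ^ a := Nat.sub_sub_self h
      rw [this]
      exact Finset.sum_congr rfl fun s _ => by rw [Nat.add_comm]
    have hB : ∀ a ∈ Finset.range k,
        (∑ s ∈ Finset.range (2 ^ a), g s)
          = ∑ x ∈ Finset.range n, if x < 2 ^ a then g x else 0 := by
      intro a ha
      have h := hle a ha
      conv_rhs => rw [← Finset.sum_filter]
      have hset : (Finset.range n).filter (fun x => x < 2 ^ a)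
          = Finset.range (2 ^ a) := by
        ext x
        simp only [Finset.mem_filter, Finset.mem_range]
        omega
      rw [hset]
    calc (∑ a ∈ Finset.range k, ∑ s ∈ Finset.range (2 ^ a),
            (g (s + (n - 2 ^ a)) - g s))
        = ∑ a ∈ Finset.range k, ((∑ s ∈ Finset.range (2 ^ a), g (s + (n - 2 ^ a)))
            - ∑ s ∈ Finset.range (2 ^ a), g s) := by
          simp [Finset.sum_sub_distrib]
      _ = ∑ a ∈ Finset.range k, ((∑ x ∈ Finset.range n, if n - 2 ^ a ≤ x then g x else 0)
            - ∑ x ∈ Finset.range n, if x < 2 ^ a then g x else 0) := by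
          exact Finset.sum_congr rfl fun a ha => by rw [hA a ha, hB a ha]
      _ = ∑ x ∈ Finset.range n, ∑ a ∈ Finset.range k,
            ((if n - 2 ^ a ≤ x then g x else 0) - if x < 2 ^ a then g x else 0) := by
          rw [Finset.sum_comm]
          exact Finset.sum_congr rfl fun a _ => by rw [Finset.sum_sub_distrib]
      _ = ∑ x ∈ Finset.range n, g x *
            ((((Finset.range k).filter fun a => n - 2 ^ a ≤ x).card : ℝ) -
              (((Finset.range k).filter fun a => x < 2 ^ a).card : ℝ)) := by
          refine Finset.sum_congr rfl fun x _ => ?_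
          rw [Finset.sum_sub_distrib,
            ← Finset.sum_filter (fun a => n - 2 ^ a ≤ x) (fun _ => g x),
            ← Finset.sum_filter (fun a => x < 2 ^ a) (fun _ => g x),
            Finset.sum_const, Finset.sum_const, nsmul_eq_mul, nsmul_eq_mul]
          ring
  · intro x y hxy
    refine Finset.card_le_card (Finset.monotone_filter_right _ ?_)
    intro a _ ha
    exact le_trans ha hxy
  · intro x y hxy
    refine Finset.card_le_card (Finset.monotone_filter_right _ ?_)
    intro a _ ha
    exact lt_of_le_of_lt hxy ha
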